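/- There exists a dynamic graph on a vertex set of 4 vertices that is 3-Path Connected but in which G_r is disconnected for every round r (hence the dynamic graph is not 1-Interval Connected and not 3-Interval Connected). In other words, T-Path Connectivity does not imply T-Interval Connectivity. -/

import Mathlib

/-- `G` is `T`-Interval Connected: for every round `r`, the graph whose edges are
exactly those present in every `G i` for `i ∈ [r, r+T-1]` is connected. -/
def TIntervalConnected {V : Type*} (G : ℕ → SimpleGraph V) (T : ℕ) : Prop :=
  ∀ r : ℕ, (⨅ i ∈ Set.Icc r (r + T - 1), G i).Connected

/-- `G` is `T`-Path Connected: for every round `r` and every pair of vertices `u, v`,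
there is a round `i ∈ [r, r+T-1]` in which `u` and `v` lie in the same connected
component of `G i`. -/
def TPathConnected {V : Type*} (G : ℕ → SimpleGraph V) (T : ℕ) : Prop :=
  ∀ r : ℕ, ∀ u v : V, ∃ i ∈ Set.Icc r (r + T - 1), (G i).Reachable u v

/-- In round `r`, the graph is the perfect matching pairing `x` with `x XOR (r % 3 + 1)`. -/
def matchG (k : ℕ) : SimpleGraph (Fin 4) where
  Adj u v := u ≠ v ∧ u.val ^^^ v.val = k % 3 + 1
  symm := by constructor; intro u v ⟨h1, h2⟩; exact ⟨h1.symm, by rw [Nat.xor_comm]; exact h2⟩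
  loopless := by constructor; intro u ⟨h, _⟩; exact h rfl

instance (k : ℕ) : DecidableRel (matchG k).Adj :=
  fun _ _ => inferInstanceAs (Decidable (_ ∧ _))

lemma matchG_mod (k : ℕ) : matchG k = matchG (k % 3) := by
  unfold matchG
  simp [Nat.mod_mod_of_dvd]

lemma matchG_not_connected (k : ℕ) : ¬ (matchG k).Connected := by
  rw [matchG_mod]
  have : k % 3 = 0 ∨ k % 3 = 1 ∨ k % 3 = 2 := by omega
  rcases this with h | h | h <;> rw [h]
  · exact fun h => absurd (h.preconnected 0 2) (by decide)
  · exact fun h => absurd (h.preconnected 0 1) (by decide)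
  · exact fun h => absurd (h.preconnected 0 1) (by decide)

lemma matchG_reach (k : ℕ) (u v : Fin 4) (h : u.val ^^^ v.val = k % 3 + 1) :
    (matchG k).Reachable u v := by
  have hne : u ≠ v := by
    intro he; subst he; simp at h
  exact SimpleGraph.Adj.reachable ⟨hne, h⟩

/-- There is a dynamic graph on 4 vertices that is 3-Path Connected but in which
`G r` is disconnected in every round (hence it is neither 1-Interval Connected nor
3-Interval Connected): `T`-Path Connectivity does not imply `T`-Interval
Connectivity. -/
theorem exists_tPathConnected_not_tIntervalConnected :
    ∃ G : ℕ → SimpleGraph (Fin 4),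
      TPathConnected G 3 ∧ (∀ r : ℕ, ¬ (G r).Connected) ∧
        ¬ (∀ r : ℕ, (G r).Connected) ∧ ¬ TIntervalConnected G 3 := by
  refine ⟨matchG, ?_, matchG_not_connected, fun h => matchG_not_connected 0 (h 0), ?_⟩
  · intro r u v
    by_cases huv : u = v
    · exact ⟨r, Set.mem_Icc.mpr ⟨le_rfl, by omega⟩, huv ▸ SimpleGraph.Reachable.refl u⟩
    · have hd : u.val ^^^ v.val ∈ Set.Icc 1 3 := by
        have hu := u.isLt; have hv := v.isLt
        have hne : u.val ≠ v.val := fun he => huv (Fin.ext he)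
        interval_cases hx : u.val <;> interval_cases hy : v.val <;> simp_all
      set d := u.val ^^^ v.val with hdef
      obtain ⟨hd1, hd3⟩ := hd
      refine ⟨r + ((d - 1) + 3 - r % 3) % 3, ?_, ?_⟩
      · constructor <;> omega
      · apply matchG_reach
        rw [← hdef]
        omega
  · intro h
    have h0 := h 0
    have hle : (⨅ i ∈ Set.Icc 0 (0 + 3 - 1), matchG i) ≤ matchG 0 := by
      exact iInf₂_le 0 (by simp)
    exact matchG_not_connected 0 (h0.mono hle)
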